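/- Let $k \ge 2$ be an integer and let $F$ be a $3$-uniform hypergraph that is $(k+2,k)$-free and also $(\ell+1,\ell)$-free for all $\ell \in [2,k-1]$. Let $H$ be the graph whose vertices are the edges of $F$, with two edges of $F$ adjacent if they share at least $2$ vertices. If $T$ is a connected subgraph of $H$, then the $2$-shadow of $V(T)$ in $F$ (the set of all $2$-element subsets of vertices of $F$ contained in some edge belonging to $V(T)$) has exactly $2 \cdot v(T) + 1$ elements. -/

import Mathlib

open Finset

private lemma induce_reachable_rtg {α : Type*} (G : SimpleGraph α) (s : Set α)
    (u v : s) (h : (G.induce s).Reachable u v) :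
    Relation.ReflTransGen (fun x y : α => x ∈ s ∧ y ∈ s ∧ G.Adj x y) u v := by
  obtain ⟨w⟩ := h
  induction w with
  | nil => exact .refl
  | @cons a b c hab p ih => exact .head ⟨a.2, b.2, hab⟩ ih

private lemma exists_exit {α : Type*} {r' : α → α → Prop} {S : Set α}
    {a b : α} (h : Relation.ReflTransGen r' a b) (ha : a ∈ S) (hb : b ∉ S) :
    ∃ e, e ∉ S ∧ ∃ f ∈ S, r' f e := by
  revert ha
  induction h using Relation.ReflTransGen.head_induction_on with
  | refl => exact fun ha => absurd ha hb
  | @head a' c hac hcb ih =>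
      intro ha
      by_cases hc : c ∈ S
      · exact ih hc
      · exact ⟨c, hc, a', ha, hac⟩

theorem connected_cluster_shadow_card {V : Type*} [Fintype V] [DecidableEq V]
    (k : ℕ) (hk : 2 ≤ k) (F : Finset (Finset V)) (h3 : ∀ e ∈ F, e.card = 3)
    (hfreek : ∀ T ⊆ F, T.card = k → k + 2 < (T.sup id).card)
    (hfreeℓ : ∀ ℓ, 2 ≤ ℓ → ℓ ≤ k - 1 → ∀ T ⊆ F, T.card = ℓ → ℓ + 1 < (T.sup id).card)
    (H : SimpleGraph {e // e ∈ F})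
    (hH : ∀ e f : {e // e ∈ F}, H.Adj e f ↔ e ≠ f ∧ 2 ≤ ((e : Finset V) ∩ (f : Finset V)).card)
    (T : Finset {e // e ∈ F})
    (hTconn : (H.induce (↑T : Set {e // e ∈ F})).Connected) :
    (((Finset.univ : Finset V).powersetCard 2).filter
      (fun P => ∃ e ∈ T, P ⊆ (e : Finset V))).card = 2 * T.card + 1 := by
  classical
  obtain ⟨⟨r, hrT⟩⟩ := hTconn.nonempty
  have hreach : ∀ a ∈ T, ∀ b ∈ T,
      Relation.ReflTransGen (fun x y : {e // e ∈ F} => x ∈ T ∧ y ∈ T ∧ H.Adj x y) a b := by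
    intro a ha b hb
    have := induce_reachable_rtg H (↑T : Set {e // e ∈ F}) ⟨a, by simpa using ha⟩
      ⟨b, by simpa using hb⟩ (hTconn.preconnected _ _)
    refine Relation.ReflTransGen.mono ?_ _ _ this
    rintro x y ⟨h1, h2, h3⟩
    exact ⟨by simpa using h1, by simpa using h2, h3⟩
  -- the growth induction
  have grow : ∀ (m : ℕ) (S : Finset {e // e ∈ F}), S ⊆ T → S.Nonempty →
      (S.sup (fun e => (e : Finset V))).card = S.card + 2 →
      (((Finset.univ : Finset V).powersetCard 2).filter
        (fun P => ∃ e ∈ S, P ⊆ (e : Finset V))).card = 2 * S.card + 1 →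
      S.card ≤ k - 1 → (T \ S).card = m →
      (((Finset.univ : Finset V).powersetCard 2).filter
        (fun P => ∃ e ∈ T, P ⊆ (e : Finset V))).card = 2 * T.card + 1 := by
    intro m
    induction m with
    | zero =>
        intro S hST _ _ hshadow _ hm
        have hTS : T = S :=
          Subset.antisymm (sdiff_eq_empty_iff_subset.mp (card_eq_zero.mp hm)) hST
        rw [hTS]; exact hshadow
    | succ m ih =>
        intro S hST hSne hspan hshadow hcard hm
        obtain ⟨b, hb⟩ : (T \ S).Nonempty := card_pos.mp (by omega)
        obtain ⟨a, haS⟩ := hSne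
        have hbT := (mem_sdiff.mp hb).1
        have hbS := (mem_sdiff.mp hb).2
        obtain ⟨e, heS, f, hfS, hfT, heT, hAdj⟩ :=
          exists_exit (S := (↑S : Set {e // e ∈ F})) (hreach a (hST haS) b hbT)
            (by simpa using haS) (by simpa using hbS)
        have heS : e ∉ S := by simpa using heS
        have hfS : f ∈ S := by simpa using hfS
        have hAdj' := (hH f e).mp hAdj
        set W := S.sup (fun g => (g : Finset V)) with hWdef
        have hfW : (f : Finset V) ⊆ W := le_sup hfS
        have hcap2 : 2 ≤ ((e : Finset V) ∩ W).card := by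
          refine le_trans hAdj'.2 (card_le_card ?_)
          intro x hx
          rw [mem_inter] at hx ⊢
          exact ⟨hx.2, hfW hx.1⟩
        have he3 : (e : Finset V).card = 3 := h3 _ e.2
        have hsplit : ((e : Finset V) ∩ W).card + ((e : Finset V) \ W).card = 3 := by
          rw [card_inter_add_card_sdiff]; exact he3
        have hsupins : (insert e S).sup (fun g => (g : Finset V)) = (e : Finset V) ∪ W := by
          rw [sup_insert]; rfl
        have hunion : ((e : Finset V) ∪ W).card = ((e : Finset V) \ W).card + W.card :=
          (card_sdiff_add_card _ _).symm
        have himsub : (insert e S).image (fun g : {e // e ∈ F} => (g : Finset V)) ⊆ F := by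
          intro x hx
          simp only [mem_image] at hx
          obtain ⟨g, -, rfl⟩ := hx
          exact g.2
        have himcard : ((insert e S).image (fun g : {e // e ∈ F} => (g : Finset V))).card
            = S.card + 1 := by
          rw [card_image_of_injective _ Subtype.coe_injective, card_insert_of_notMem heS]
        have himsup : ((insert e S).image (fun g : {e // e ∈ F} => (g : Finset V))).sup id
            = (e : Finset V) ∪ W := by
          rw [sup_image]; exact hsupins
        have hScpos : 1 ≤ S.card := card_pos.mpr ⟨a, haS⟩
        by_cases hkc : S.card = k - 1
        · exfalso
          have hgt := hfreek _ himsub (by rw [himcard, hkc]; omega)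
          rw [himsup] at hgt
          omega
        · have hgt := hfreeℓ (S.card + 1) (by omega) (by omega) _ himsub himcard
          rw [himsup] at hgt
          have hd1 : ((e : Finset V) \ W).card = 1 := by omega
          have hcapeq : ((e : Finset V) ∩ W).card = 2 := by omega
          have hfe_sub : (f : Finset V) ∩ (e : Finset V) ⊆ (e : Finset V) ∩ W := by
            intro x hx
            rw [mem_inter] at hx ⊢
            exact ⟨hx.2, hfW hx.1⟩
          have hfeW : (f : Finset V) ∩ (e : Finset V) = (e : Finset V) ∩ W :=
            eq_of_subset_of_card_le hfe_sub (by omega)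
          obtain ⟨x, hx⟩ := card_eq_one.mp hd1
          have hxmem : x ∈ (e : Finset V) \ W := hx ▸ mem_singleton_self x
          have hxe : x ∈ (e : Finset V) := (mem_sdiff.mp hxmem).1
          have hxW : x ∉ W := (mem_sdiff.mp hxmem).2
          -- every element of e other than x lies in e ∩ W
          have hein : ∀ y ∈ (e : Finset V), y ≠ x → y ∈ (e : Finset V) ∩ W := by
            intro y hy hyx
            rw [mem_inter]
            refine ⟨hy, ?_⟩
            by_contra hyW
            have : y ∈ (e : Finset V) \ W := mem_sdiff.mpr ⟨hy, hyW⟩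
            rw [hx, mem_singleton] at this
            exact hyx this
          set A := ((Finset.univ : Finset V).powersetCard 2).filter
            (fun P => ∃ g ∈ S, P ⊆ (g : Finset V)) with hAdef
          have hsh : ((Finset.univ : Finset V).powersetCard 2).filter
              (fun P => ∃ g ∈ insert e S, P ⊆ (g : Finset V))
              = ((e : Finset V).powersetCard 2) ∪ A := by
            ext P
            simp only [hAdef, mem_filter, mem_union, mem_powersetCard, mem_insert,
              subset_univ, true_and]
            constructor
            · rintro ⟨hP2, g, hg | hg, hPg⟩
              · exact Or.inl ⟨by rw [hg] at hPg; exact hPg, hP2⟩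
              · exact Or.inr ⟨hP2, g, hg, hPg⟩
            · rintro (⟨hPe, hP2⟩ | ⟨hP2, g, hg, hPg⟩)
              · exact ⟨hP2, e, Or.inl rfl, hPe⟩
              · exact ⟨hP2, g, Or.inr hg, hPg⟩
          have hBA : (e : Finset V).powersetCard 2 \ A
              = ((e : Finset V).powersetCard 2).filter (fun P => x ∈ P) := by
            ext P
            constructor
            · intro hP
              obtain ⟨hPB, hnA⟩ := mem_sdiff.mp hP
              obtain ⟨hPe, hP2⟩ := mem_powersetCard.mp hPB
              rw [mem_filter]
              refine ⟨hPB, ?_⟩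
              by_contra hxP
              apply hnA
              rw [hAdef, mem_filter]
              refine ⟨mem_powersetCard.mpr ⟨subset_univ P, hP2⟩, f, hfS, ?_⟩
              intro y hy
              have hyW := hein y (hPe hy) (fun h => hxP (h ▸ hy))
              rw [← hfeW, mem_inter] at hyW
              exact hyW.1
            · intro hP
              obtain ⟨hPB, hxP⟩ := mem_filter.mp hP
              rw [mem_sdiff]
              refine ⟨hPB, ?_⟩
              rw [hAdef, mem_filter]
              rintro ⟨-, g, hgS, hPg⟩
              exact hxW (le_sup (f := fun g : {e // e ∈ F} => (g : Finset V)) hgS (hPg hxP))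
          have hnotx : ((e : Finset V).powersetCard 2).filter (fun P => x ∉ P)
              = {(e : Finset V) ∩ W} := by
            ext P
            simp only [mem_filter, mem_powersetCard, mem_singleton]
            constructor
            · rintro ⟨⟨hPe, hP2⟩, hxP⟩
              refine eq_of_subset_of_card_le ?_ (by omega)
              intro y hy
              exact hein y (hPe hy) (fun h => hxP (h ▸ hy))
            · rintro rfl
              exact ⟨⟨inter_subset_left, hcapeq⟩, fun h => hxW (mem_inter.mp h).2⟩
          have hBcard : ((e : Finset V).powersetCard 2).card = 3 := by
            rw [card_powersetCard, he3]; rfl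
          have hfiltx : (((e : Finset V).powersetCard 2).filter (fun P => x ∈ P)).card = 2 := by
            have := card_filter_add_card_filter_not
              (s := (e : Finset V).powersetCard 2) (p := fun P => x ∈ P)
            rw [hBcard] at this
            have h1 : (((e : Finset V).powersetCard 2).filter (fun P => ¬ x ∈ P)).card = 1 := by
              rw [show ((e : Finset V).powersetCard 2).filter (fun P => ¬ x ∈ P)
                  = {(e : Finset V) ∩ W} from hnotx]
              exact card_singleton _
            omega
          have hshadow' : (((Finset.univ : Finset V).powersetCard 2).filter
              (fun P => ∃ g ∈ insert e S, P ⊆ (g : Finset V))).card = 2 * (S.card + 1) + 1 := by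
            rw [hsh, ← card_sdiff_add_card, hBA, hfiltx, hshadow]
            ring
          have hspan' : ((insert e S).sup (fun g : {e // e ∈ F} => (g : Finset V))).card
              = (insert e S).card + 2 := by
            rw [hsupins, card_insert_of_notMem heS]
            omega
          have hm' : (T \ insert e S).card = m := by
            rw [sdiff_insert, card_erase_of_mem (mem_sdiff.mpr ⟨heT, heS⟩)]
            omega
          refine ih (insert e S) (insert_subset heT hST) ⟨e, mem_insert_self _ _⟩ hspan' ?_
            (by rw [card_insert_of_notMem heS]; omega) hm'
          rw [hshadow', card_insert_of_notMem heS]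
  -- apply with S = {r}
  have hr3 : ((r : Finset V)).card = 3 := h3 _ r.2
  refine grow (T \ {r}).card {r} (by simpa using hrT) (singleton_nonempty r) ?_ ?_ (by rw [card_singleton]; omega) rfl
  · rw [sup_singleton, card_singleton, hr3]
  · have : ((Finset.univ : Finset V).powersetCard 2).filter
        (fun P => ∃ g ∈ ({r} : Finset {e // e ∈ F}), P ⊆ (g : Finset V))
        = (r : Finset V).powersetCard 2 := by
      ext P
      simp only [mem_filter, mem_powersetCard, mem_singleton, exists_eq_left,
        subset_univ, true_and]
      tauto
    rw [this, card_powersetCard, hr3, card_singleton]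
    rfl
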